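/- Let α, α₁ ∈ RO. The Hörmander space H^{α₁}(ℝⁿ) is continuously embedded in H^{α}(ℝⁿ) if and only if the function t ↦ α(t)/α₁(t) is bounded in a neighborhood of infinity. -/

import Mathlib

/-- The class RO of RO-varying functions at infinity. -/
def IsRO (α : ℝ → ℝ) : Prop :=
  Measurable (fun t : Set.Ici (1 : ℝ) => α t.1) ∧
  (∀ t : ℝ, 1 ≤ t → 0 < α t) ∧
  ∃ b : ℝ, 1 < b ∧ ∃ c : ℝ, 1 ≤ c ∧ ∀ t : ℝ, 1 ≤ t → ∀ l : ℝ, 1 ≤ l → l ≤ b →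
    c⁻¹ ≤ α (l * t) / α t ∧ α (l * t) / α t ≤ c

/-- The lower Matuszewska index `σ₀(α)`: the supremum of all `s₀` for which
`c₀ λ^{s₀} ≤ α (λ t) / α t` (for some `c₀ > 0`) for all `t ≥ 1`, `λ ≥ 1`. -/
noncomputable def sigma0 (α : ℝ → ℝ) : ℝ :=
  sSup {s : ℝ | ∃ c : ℝ, 0 < c ∧ ∀ t : ℝ, 1 ≤ t → ∀ l : ℝ, 1 ≤ l →
    c * l ^ s ≤ α (l * t) / α t}

/-- The upper Matuszewska index `σ₁(α)`: the infimum of all `s₁` for which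
`α (λ t) / α t ≤ c₁ λ^{s₁}` (for some `c₁ > 0`) for all `t ≥ 1`, `λ ≥ 1`. -/
noncomputable def sigma1 (α : ℝ → ℝ) : ℝ :=
  sInf {s : ℝ | ∃ c : ℝ, 0 < c ∧ ∀ t : ℝ, 1 ≤ t → ∀ l : ℝ, 1 ≤ l →
    α (l * t) / α t ≤ c * l ^ s}

open MeasureTheory

/-- The smoothed modulus `⟨ξ⟩ = (1 + |ξ|²)^{1/2}`. -/
noncomputable def smod {n : ℕ} (ξ : EuclideanSpace ℝ (Fin n)) : ℝ :=
  Real.sqrt (1 + ‖ξ‖ ^ 2)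

/-- Membership in the (Fourier-side model of the) Hörmander space `H^α(ℝⁿ)`:
`g` is the Fourier transform of a distribution `w ∈ H^α(ℝⁿ)` iff it is (locally
integrable and) such that `∫ α²(⟨ξ⟩) |g ξ|² dξ < ∞`. -/
def MemH {n : ℕ} (α : ℝ → ℝ) (g : EuclideanSpace ℝ (Fin n) → ℂ) : Prop :=
  Integrable fun ξ => α (smod ξ) ^ 2 * ‖g ξ‖ ^ 2

/-- The Hörmander norm `‖w‖_{H^α} = (∫ α²(⟨ξ⟩) |ŵ(ξ)|² dξ)^{1/2}`, computed on the
Fourier transform `g = ŵ`. -/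
noncomputable def Hnorm {n : ℕ} (α : ℝ → ℝ) (g : EuclideanSpace ℝ (Fin n) → ℂ) : ℝ :=
  (∫ ξ, α (smod ξ) ^ 2 * ‖g ξ‖ ^ 2) ^ ((1 : ℝ) / 2)

/-- For `α, α₁ ∈ RO`, the Hörmander space `H^{α₁}(ℝⁿ)` is continuously embedded in
`H^{α}(ℝⁿ)` iff `α/α₁` is bounded in a neighborhood of infinity. -/
lemma ro_pow_bound (α : ℝ → ℝ) (hpos : ∀ t : ℝ, 1 ≤ t → 0 < α t) (b c : ℝ) (hb : 1 < b)
    (hc : 1 ≤ c)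
    (h : ∀ t : ℝ, 1 ≤ t → ∀ l : ℝ, 1 ≤ l → l ≤ b →
      c⁻¹ ≤ α (l * t) / α t ∧ α (l * t) / α t ≤ c) :
    ∀ k : ℕ, ∀ t : ℝ, 1 ≤ t → ∀ l : ℝ, 1 ≤ l → l ≤ b ^ k →
      (c ^ k)⁻¹ ≤ α (l * t) / α t ∧ α (l * t) / α t ≤ c ^ k := by
  intro k
  induction k with
  | zero =>
    intro t ht l hl hlb
    simp only [pow_zero] at hlb ⊢
    have : l = 1 := le_antisymm hlb hl
    subst this
    rw [one_mul, div_self (hpos t ht).ne']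
    norm_num
  | succ k ih =>
    intro t ht l hl hlb
    by_cases hcase : l ≤ b ^ k
    · obtain ⟨h1, h2⟩ := ih t ht l hl hcase
      have hck : (0:ℝ) < c ^ k := pow_pos (lt_of_lt_of_le one_pos hc) k
      constructor
      · refine le_trans ?_ h1
        apply inv_anti₀ hck
        calc c ^ k ≤ c ^ k * c := le_mul_of_one_le_right hck.le hc
        _ = c ^ (k+1) := (pow_succ c k).symm
      · exact h2.trans (by calc c ^ k ≤ c ^ k * c := le_mul_of_one_le_right hck.le hc
          _ = c ^ (k+1) := (pow_succ c k).symm)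
    · push_neg at hcase
      have hbk : (1:ℝ) ≤ b ^ k := one_le_pow₀ hb.le
      have hbkpos : (0:ℝ) < b ^ k := lt_of_lt_of_le one_pos hbk
      set l₁ := l / b ^ k with hl₁
      have hl₁1 : 1 ≤ l₁ := (one_le_div hbkpos).2 hcase.le
      have hl₁b : l₁ ≤ b := by
        rw [hl₁, div_le_iff₀ hbkpos]
        calc l ≤ b ^ (k+1) := hlb
        _ = b * b ^ k := by ring
      have ht' : (1:ℝ) ≤ b ^ k * t := by nlinarith
      have hfact : l * t = l₁ * (b ^ k * t) := by
        rw [hl₁, div_mul_eq_mul_div, eq_div_iff hbkpos.ne']; ring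
      have h1 := h (b ^ k * t) ht' l₁ hl₁1 hl₁b
      have h2 := ih t ht (b ^ k) hbk le_rfl
      have hpos1 : 0 < α (b ^ k * t) := hpos _ ht'
      have hpos2 : 0 < α t := hpos t ht
      have heq : α (l * t) / α t = (α (l₁ * (b ^ k * t)) / α (b ^ k * t)) * (α (b ^ k * t) / α t) := by
        rw [← hfact, div_mul_div_comm, mul_comm (α (l * t)), mul_div_mul_left _ _ hpos1.ne']
      rw [heq]
      have hcpos : (0:ℝ) < c := lt_of_lt_of_le one_pos hc
      have hckpos : (0:ℝ) < c ^ k := pow_pos hcpos k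
      constructor
      · have : (c ^ (k+1))⁻¹ = c⁻¹ * (c ^ k)⁻¹ := by
          rw [pow_succ, mul_inv, mul_comm]
        rw [this]
        exact mul_le_mul h1.1 h2.1 (inv_nonneg.2 hckpos.le)
          (le_trans (inv_nonneg.2 hcpos.le) h1.1)
      · have : c ^ (k+1) = c * c ^ k := by ring
        rw [this]
        exact mul_le_mul h1.2 h2.2 (div_nonneg hpos1.le hpos2.le)
          hcpos.le

lemma ro_interval_bounds (α : ℝ → ℝ) (hα : IsRO α) (r : ℝ) :
    ∃ K₁ K₂ : ℝ, 0 < K₁ ∧ ∀ s : ℝ, 1 ≤ s → s ≤ r → K₁ ≤ α s ∧ α s ≤ K₂ := by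
  obtain ⟨hmeas, hpos, b, hb, c, hc, h⟩ := hα
  obtain ⟨k, hk⟩ : ∃ k : ℕ, r ≤ b ^ k := (pow_unbounded_of_one_lt r hb).imp fun _ h => h.le
  have hckpos : (0:ℝ) < c ^ k := pow_pos (lt_of_lt_of_le one_pos hc) k
  have hα1 : 0 < α 1 := hpos 1 le_rfl
  refine ⟨(c ^ k)⁻¹ * α 1, c ^ k * α 1, by positivity, fun s hs hsr => ?_⟩
  obtain ⟨h1, h2⟩ := ro_pow_bound α hpos b c hb hc h k 1 le_rfl s hs (hsr.trans hk)
  rw [mul_one] at h1 h2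
  exact ⟨(le_div_iff₀ hα1).1 h1, (div_le_iff₀ hα1).1 h2⟩

lemma one_le_smod {n : ℕ} (ξ : EuclideanSpace ℝ (Fin n)) : 1 ≤ smod ξ := by
  have := Real.sqrt_le_sqrt (show (1:ℝ) ≤ 1 + ‖ξ‖ ^ 2 by nlinarith [sq_nonneg ‖ξ‖])
  simpa [smod] using this

lemma continuous_smod {n : ℕ} : Continuous (fun ξ : EuclideanSpace ℝ (Fin n) => smod ξ) := by
  unfold smod
  exact (continuous_const.add ((continuous_norm).pow 2)).sqrt

lemma measurable_comp_smod {n : ℕ} {α : ℝ → ℝ} (hα : IsRO α) :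
    Measurable (fun ξ : EuclideanSpace ℝ (Fin n) => α (smod ξ)) := by
  have h1 : Measurable (fun ξ : EuclideanSpace ℝ (Fin n) =>
      (⟨smod ξ, one_le_smod ξ⟩ : Set.Ici (1:ℝ))) :=
    (continuous_smod.measurable).subtype_mk
  exact hα.1.comp h1

lemma norm_le_smod {n : ℕ} (ξ : EuclideanSpace ℝ (Fin n)) : ‖ξ‖ ≤ smod ξ := by
  have := Real.sqrt_le_sqrt (show ‖ξ‖ ^ 2 ≤ 1 + ‖ξ‖ ^ 2 by nlinarith)
  rwa [Real.sqrt_sq (norm_nonneg ξ)] at this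

lemma smod_of_norm {n : ℕ} (ξ : EuclideanSpace ℝ (Fin n)) (m : ℝ) (hm : 1 ≤ m)
    (h : ‖ξ‖ = Real.sqrt (m ^ 2 - 1)) : smod ξ = m := by
  rw [smod, h, Real.sq_sqrt (by nlinarith)]
  rw [show 1 + (m ^ 2 - 1) = m ^ 2 by ring, Real.sqrt_sq (by linarith)]

/-- Forward direction: pointwise domination gives the embedding. -/
lemma embed_of_dom {n : ℕ} {α α₁ : ℝ → ℝ} (hα : IsRO α) (hα₁ : IsRO α₁) (C : ℝ) (hC : 0 < C)
    (hdom : ∀ s : ℝ, 1 ≤ s → α s ≤ C * α₁ s)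
    (g : EuclideanSpace ℝ (Fin n) → ℂ) (hg : MemH α₁ g) :
    MemH α g ∧ Hnorm α g ≤ C * Hnorm α₁ g := by
  have hpos₁ : ∀ ξ : EuclideanSpace ℝ (Fin n), 0 < α₁ (smod ξ) :=
    fun ξ => hα₁.2.1 _ (one_le_smod ξ)
  set f : EuclideanSpace ℝ (Fin n) → ℝ := fun ξ => α (smod ξ) ^ 2 * ‖g ξ‖ ^ 2 with hf
  set f₁ : EuclideanSpace ℝ (Fin n) → ℝ := fun ξ => α₁ (smod ξ) ^ 2 * ‖g ξ‖ ^ 2 with hf₁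
  have hg' : Integrable f₁ := hg
  -- measurability of f
  have hfm : AEStronglyMeasurable f volume := by
    have heq : f = fun ξ => (α (smod ξ) / α₁ (smod ξ)) ^ 2 * f₁ ξ := by
      funext ξ
      have := (hpos₁ ξ).ne'
      simp only [hf, hf₁]
      field_simp
    rw [heq]
    exact ((((measurable_comp_smod hα).div (measurable_comp_smod hα₁)).pow_const 2).aestronglyMeasurable).mul
      hg'.aestronglyMeasurable
  have hbound : ∀ ξ, f ξ ≤ C ^ 2 * f₁ ξ := by
    intro ξ
    have h1 : α (smod ξ) ≤ C * α₁ (smod ξ) := hdom _ (one_le_smod ξ)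
    have h2 : (0:ℝ) ≤ α (smod ξ) := (hα.2.1 _ (one_le_smod ξ)).le
    have h3 : α (smod ξ) ^ 2 ≤ C ^ 2 * α₁ (smod ξ) ^ 2 := by nlinarith
    simp only [hf, hf₁]
    calc α (smod ξ) ^ 2 * ‖g ξ‖ ^ 2 ≤ (C ^ 2 * α₁ (smod ξ) ^ 2) * ‖g ξ‖ ^ 2 :=
      mul_le_mul_of_nonneg_right h3 (by positivity)
    _ = C ^ 2 * (α₁ (smod ξ) ^ 2 * ‖g ξ‖ ^ 2) := by ring
  have hfint : Integrable f := by
    refine Integrable.mono' (hg'.const_mul (C ^ 2)) hfm (ae_of_all _ fun ξ => ?_)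
    rw [Real.norm_of_nonneg (by positivity)]
    exact hbound ξ
  refine ⟨hfint, ?_⟩
  have hI : ∫ ξ, f ξ ≤ C ^ 2 * ∫ ξ, f₁ ξ := by
    rw [← integral_const_mul]
    exact integral_mono hfint (hg'.const_mul _) hbound
  have hI0 : (0:ℝ) ≤ ∫ ξ, f ξ := integral_nonneg fun ξ => by positivity
  have hI₁0 : (0:ℝ) ≤ ∫ ξ, f₁ ξ := integral_nonneg fun ξ => by positivity
  show (∫ ξ, f ξ) ^ ((1:ℝ)/2) ≤ C * (∫ ξ, f₁ ξ) ^ ((1:ℝ)/2)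
  rw [← Real.sqrt_eq_rpow, ← Real.sqrt_eq_rpow]
  calc Real.sqrt (∫ ξ, f ξ) ≤ Real.sqrt (C ^ 2 * ∫ ξ, f₁ ξ) := Real.sqrt_le_sqrt hI
  _ = C * Real.sqrt (∫ ξ, f₁ ξ) := by
      rw [Real.sqrt_mul (by positivity), Real.sqrt_sq hC.le]

/-- Necessity: embedding forces pointwise bound on the ratio, for t ≥ 1. -/
lemma ratio_bound_of_embed {n : ℕ} (hn : 0 < n) {α α₁ : ℝ → ℝ} (hα : IsRO α) (hα₁ : IsRO α₁)
    (C : ℝ) (hC : 0 < C)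
    (hemb : ∀ g : EuclideanSpace ℝ (Fin n) → ℂ,
      MemH α₁ g → MemH α g ∧ Hnorm α g ≤ C * Hnorm α₁ g) :
    ∃ M : ℝ, ∀ t : ℝ, 1 ≤ t → α t / α₁ t ≤ M := by
  obtain ⟨hm, hpos, b, hb, c, hc, hprop⟩ := hα
  obtain ⟨hm₁, hpos₁, b₁, hb₁, c₁, hc₁, hprop₁⟩ := hα₁
  have hαRO : IsRO α := ⟨hm, hpos, b, hb, c, hc, hprop⟩
  have hα₁RO : IsRO α₁ := ⟨hm₁, hpos₁, b₁, hb₁, c₁, hc₁, hprop₁⟩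
  refine ⟨C * (c * c₁), fun t ht => ?_⟩
  set B := min b b₁ with hB
  have hB1 : 1 < B := lt_min hb hb₁
  have ht0 : 0 < t := lt_of_lt_of_le one_pos ht
  set S : Set (EuclideanSpace ℝ (Fin n)) := smod ⁻¹' (Set.Icc t (B * t)) with hS
  have hSm : MeasurableSet S := (continuous_smod.measurable) measurableSet_Icc
  -- bounds on S
  have hon : ∀ ξ ∈ S, (c⁻¹ * α t ≤ α (smod ξ) ∧ α (smod ξ) ≤ c * α t) ∧
      (c₁⁻¹ * α₁ t ≤ α₁ (smod ξ) ∧ α₁ (smod ξ) ≤ c₁ * α₁ t) := by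
    intro ξ hξ
    obtain ⟨h1, h2⟩ := hξ
    set l := smod ξ / t with hl
    have hl1 : 1 ≤ l := (one_le_div ht0).2 h1
    have hlt : l * t = smod ξ := by rw [hl, div_mul_cancel₀ _ ht0.ne']
    have hlb : l ≤ b := le_trans ((div_le_iff₀ ht0).2 (h2.trans (by
      nlinarith [min_le_left b b₁]))) (le_refl b)
    have hlb₁ : l ≤ b₁ := (div_le_iff₀ ht0).2 (h2.trans (by nlinarith [min_le_right b b₁]))
    have hαt := hpos t ht
    have hα₁t := hpos₁ t ht
    obtain ⟨p1, p2⟩ := hprop t ht l hl1 hlb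
    obtain ⟨q1, q2⟩ := hprop₁ t ht l hl1 hlb₁
    rw [hlt] at p1 p2 q1 q2
    exact ⟨⟨(le_div_iff₀ hαt).1 p1, (div_le_iff₀ hαt).1 p2⟩,
      ⟨(le_div_iff₀ hα₁t).1 q1, (div_le_iff₀ hα₁t).1 q2⟩⟩
  -- S has positive finite measure
  have hSfin : volume S < ⊤ := by
    refine lt_of_le_of_lt (measure_mono ?_) (measure_closedBall_lt_top (x := (0 : EuclideanSpace ℝ (Fin n))) (r := B * t))
    intro ξ hξ
    rw [Metric.mem_closedBall, dist_zero_right]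
    exact (norm_le_smod ξ).trans hξ.2
  have hSpos : 0 < volume S := by
    set m := (t + B * t) / 2 with hm'
    have hm1 : 1 ≤ m := by nlinarith
    have hmlt : t < m ∧ m < B * t := by constructor <;> nlinarith
    set x : EuclideanSpace ℝ (Fin n) :=
      Real.sqrt (m ^ 2 - 1) • EuclideanSpace.single (⟨0, hn⟩ : Fin n) (1:ℝ) with hx
    have hxnorm : ‖x‖ = Real.sqrt (m ^ 2 - 1) := by
      rw [hx, norm_smul, EuclideanSpace.norm_single]
      simp [abs_of_nonneg (Real.sqrt_nonneg _)]
    have hxsm : smod x = m := smod_of_norm x m hm1 hxnorm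
    have hU : IsOpen (smod ⁻¹' (Set.Ioo t (B * t)) : Set (EuclideanSpace ℝ (Fin n))) :=
      isOpen_Ioo.preimage continuous_smod
    have hne : (smod ⁻¹' (Set.Ioo t (B * t)) : Set (EuclideanSpace ℝ (Fin n))).Nonempty :=
      ⟨x, by rw [Set.mem_preimage, hxsm]; exact ⟨hmlt.1, hmlt.2⟩⟩
    refine lt_of_lt_of_le (hU.measure_pos _ hne) (measure_mono ?_)
    intro ξ hξ
    exact ⟨hξ.1.le, hξ.2.le⟩
  set ν := (volume S).toReal with hν
  have hν0 : 0 < ν := ENNReal.toReal_pos hSpos.ne' hSfin.ne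
  -- the test function
  set g : EuclideanSpace ℝ (Fin n) → ℂ := S.indicator (fun _ => 1) with hg
  have hgn : ∀ ξ, ‖g ξ‖ ^ 2 = S.indicator (fun _ => (1:ℝ)) ξ := by
    intro ξ
    by_cases hξ : ξ ∈ S <;> simp [hg, Set.indicator_apply, hξ]
  have hαt := hpos t ht
  have hα₁t := hpos₁ t ht
  have hc0 : (0:ℝ) < c := lt_of_lt_of_le one_pos hc
  have hc₁0 : (0:ℝ) < c₁ := lt_of_lt_of_le one_pos hc₁
  -- integrability of f₁
  set f₁ : EuclideanSpace ℝ (Fin n) → ℝ := fun ξ => α₁ (smod ξ) ^ 2 * ‖g ξ‖ ^ 2 with hf₁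
  have hind : Integrable (S.indicator (fun _ => ((c₁ * α₁ t) ^ 2 : ℝ))) := by
    rw [integrable_indicator_iff hSm]
    exact integrableOn_const hSfin.ne
  have hf₁m : AEStronglyMeasurable f₁ volume := by
    apply Measurable.aestronglyMeasurable
    apply Measurable.mul (((measurable_comp_smod hα₁RO)).pow_const 2)
    have : (fun ξ : EuclideanSpace ℝ (Fin n) => ‖g ξ‖ ^ 2) = S.indicator (fun _ => (1:ℝ)) := by
      funext ξ; exact hgn ξ
    rw [this]
    exact measurable_const.indicator hSm
  have hf₁le : ∀ ξ, f₁ ξ ≤ S.indicator (fun _ => ((c₁ * α₁ t) ^ 2 : ℝ)) ξ := by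
    intro ξ
    by_cases hξ : ξ ∈ S
    · have h2 := ((hon ξ hξ).2)
      have h0 : 0 ≤ α₁ (smod ξ) := (hpos₁ _ (one_le_smod ξ)).le
      simp only [hf₁, hgn ξ, Set.indicator_of_mem hξ]
      nlinarith [h2.1, h2.2]
    · simp only [hf₁, hgn ξ, Set.indicator_of_notMem hξ, mul_zero, le_refl]
  have hf₁int : Integrable f₁ := by
    refine Integrable.mono' hind hf₁m (ae_of_all _ fun ξ => ?_)
    rw [Real.norm_of_nonneg (by positivity)]
    exact hf₁le ξ
  -- apply embedding
  obtain ⟨hfint, hle⟩ := hemb g hf₁int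
  set f : EuclideanSpace ℝ (Fin n) → ℝ := fun ξ => α (smod ξ) ^ 2 * ‖g ξ‖ ^ 2 with hf
  have hfint' : Integrable f := hfint
  -- lower bound for ∫ f
  have hlow : (c⁻¹ * α t) ^ 2 * ν ≤ ∫ ξ, f ξ := by
    have hptw : ∀ ξ, S.indicator (fun _ => ((c⁻¹ * α t) ^ 2 : ℝ)) ξ ≤ f ξ := by
      intro ξ
      by_cases hξ : ξ ∈ S
      · have h1 := ((hon ξ hξ).1).1
        have h0 : (0:ℝ) ≤ c⁻¹ * α t := by positivity
        simp only [hf, hgn ξ, Set.indicator_of_mem hξ]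
        nlinarith
      · simp only [hf, hgn ξ, Set.indicator_of_notMem hξ, mul_zero, le_refl]
    have hind' : Integrable (S.indicator (fun _ => ((c⁻¹ * α t) ^ 2 : ℝ))) := by
      rw [integrable_indicator_iff hSm]
      exact integrableOn_const hSfin.ne
    calc (c⁻¹ * α t) ^ 2 * ν = ∫ ξ, S.indicator (fun _ => ((c⁻¹ * α t) ^ 2 : ℝ)) ξ := by
          rw [integral_indicator_const _ hSm]; simp [hν, mul_comm, measureReal_def]
    _ ≤ ∫ ξ, f ξ := integral_mono hind' hfint' hptw
  -- upper bound for ∫ f₁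
  have hup : ∫ ξ, f₁ ξ ≤ (c₁ * α₁ t) ^ 2 * ν := by
    calc ∫ ξ, f₁ ξ ≤ ∫ ξ, S.indicator (fun _ => ((c₁ * α₁ t) ^ 2 : ℝ)) ξ :=
          integral_mono hf₁int hind hf₁le
    _ = (c₁ * α₁ t) ^ 2 * ν := by rw [integral_indicator_const _ hSm]; simp [hν, mul_comm, measureReal_def]
  -- conclude
  have hI0 : (0:ℝ) ≤ ∫ ξ, f ξ := integral_nonneg fun ξ => by positivity
  have hI₁0 : (0:ℝ) ≤ ∫ ξ, f₁ ξ := integral_nonneg fun ξ => by positivity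
  have hle' : Real.sqrt (∫ ξ, f ξ) ≤ C * Real.sqrt (∫ ξ, f₁ ξ) := by
    have : Hnorm α g ≤ C * Hnorm α₁ g := hle
    rwa [Hnorm, Hnorm, ← Real.sqrt_eq_rpow, ← Real.sqrt_eq_rpow] at this
  have hchain : (c⁻¹ * α t) * Real.sqrt ν ≤ C * ((c₁ * α₁ t) * Real.sqrt ν) := by
    have e1 : (c⁻¹ * α t) * Real.sqrt ν = Real.sqrt ((c⁻¹ * α t) ^ 2 * ν) := by
      rw [Real.sqrt_mul (by positivity), Real.sqrt_sq (by positivity)]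
    have e2 : Real.sqrt ((c₁ * α₁ t) ^ 2 * ν) = (c₁ * α₁ t) * Real.sqrt ν := by
      rw [Real.sqrt_mul (by positivity), Real.sqrt_sq (by positivity)]
    calc (c⁻¹ * α t) * Real.sqrt ν = Real.sqrt ((c⁻¹ * α t) ^ 2 * ν) := e1
    _ ≤ Real.sqrt (∫ ξ, f ξ) := Real.sqrt_le_sqrt hlow
    _ ≤ C * Real.sqrt (∫ ξ, f₁ ξ) := hle'
    _ ≤ C * Real.sqrt ((c₁ * α₁ t) ^ 2 * ν) := by
        exact mul_le_mul_of_nonneg_left (Real.sqrt_le_sqrt hup) hC.le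
    _ = C * ((c₁ * α₁ t) * Real.sqrt ν) := by rw [e2]
  have hν' : 0 < Real.sqrt ν := Real.sqrt_pos.2 hν0
  have hfinal : c⁻¹ * α t ≤ C * (c₁ * α₁ t) :=
    le_of_mul_le_mul_right
      (show (c⁻¹ * α t) * Real.sqrt ν ≤ (C * (c₁ * α₁ t)) * Real.sqrt ν by
        calc (c⁻¹ * α t) * Real.sqrt ν ≤ C * ((c₁ * α₁ t) * Real.sqrt ν) := hchain
        _ = (C * (c₁ * α₁ t)) * Real.sqrt ν := by ring) hν'
  rw [div_le_iff₀ hα₁t]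
  have : α t ≤ c * (C * (c₁ * α₁ t)) := by
    calc α t = c * (c⁻¹ * α t) := by field_simp
    _ ≤ c * (C * (c₁ * α₁ t)) := mul_le_mul_of_nonneg_left hfinal hc0.le
  calc α t ≤ c * (C * (c₁ * α₁ t)) := this
  _ = C * (c * c₁) * α₁ t := by ring

theorem stmt13 (n : ℕ) (hn : 0 < n) (α α₁ : ℝ → ℝ) (hα : IsRO α) (hα₁ : IsRO α₁) :
    (∃ C : ℝ, 0 < C ∧ ∀ g : EuclideanSpace ℝ (Fin n) → ℂ,
        MemH α₁ g → MemH α g ∧ Hnorm α g ≤ C * Hnorm α₁ g) ↔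
      ∃ r M : ℝ, ∀ t : ℝ, r ≤ t → α t / α₁ t ≤ M := by
  constructor
  · rintro ⟨C, hC, hemb⟩
    obtain ⟨M, hM⟩ := ratio_bound_of_embed hn hα hα₁ C hC hemb
    exact ⟨1, M, hM⟩
  · rintro ⟨r, M, hrM⟩
    set r' := max r 1 with hr'
    obtain ⟨K₁, K₂, hK₁, hK⟩ := ro_interval_bounds α₁ hα₁ r'
    obtain ⟨L₁, L₂, hL₁, hL⟩ := ro_interval_bounds α hα r'
    have hr'1 : (1:ℝ) ≤ r' := le_max_right r 1
    have hL2pos : 0 < L₂ := lt_of_lt_of_le (hα.2.1 1 le_rfl)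
      (hL 1 le_rfl hr'1).2
    set C := max M (L₂ / K₁) with hCdef
    have hC : 0 < C := lt_of_lt_of_le (by positivity) (le_max_right _ _)
    have hdom : ∀ s : ℝ, 1 ≤ s → α s ≤ C * α₁ s := by
      intro s hs
      by_cases hcase : s ≤ r'
      · obtain ⟨k1, _⟩ := hK s hs hcase
        obtain ⟨_, l2⟩ := hL s hs hcase
        calc α s ≤ L₂ := l2
        _ = (L₂ / K₁) * K₁ := by field_simp
        _ ≤ C * α₁ s := by
            apply mul_le_mul (le_max_right _ _) k1 hK₁.le hC.le
      · push_neg at hcase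
        have hsr : r ≤ s := le_trans (le_max_left r 1) hcase.le
        have hα₁s : 0 < α₁ s := hα₁.2.1 s hs
        have := hrM s hsr
        rw [div_le_iff₀ hα₁s] at this
        calc α s ≤ M * α₁ s := this
        _ ≤ C * α₁ s := mul_le_mul_of_nonneg_right (le_max_left _ _) hα₁s.le
    exact ⟨C, hC, fun g hg => embed_of_dom hα hα₁ C hC hdom g hg⟩
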